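/- For ∘- and •-free formulas, the substitution lemma holds without relying on the non-deterministic clause: if A is a formula of the diagram language with at most one free variable x, containing no occurrence of ° or •, and c₁, c₂ are constants denoting the same element of the domain, then v(A(c₁/x)) = v(A(c₂/x)), provable without using clause (15) of the valuation definition. -/

import Mathlib

set_option autoImplicit true
set_option relaxedAutoImplicit true

namespace QLETF

/-- Formulas of a first-order language with a classicality operator `cl` (∘),
a non-classicality operator `ncl` (•), identity `eq`, over a type `K` of
individual constants.  Terms are `ℕ ⊕ K`: `Sum.inl n` is the variable `vₙ`,
`Sum.inr c` is the constant `c`.  Predicate letters are indexed by `ℕ`. -/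
inductive Fm (K : Type) : Type where
  | pred : ℕ → List (ℕ ⊕ K) → Fm K
  | eq   : (ℕ ⊕ K) → (ℕ ⊕ K) → Fm K
  | neg  : Fm K → Fm K
  | conj : Fm K → Fm K → Fm K
  | disj : Fm K → Fm K → Fm K
  | cl   : Fm K → Fm K
  | ncl  : Fm K → Fm K
  | all  : ℕ → Fm K → Fm K
  | ex   : ℕ → Fm K → Fm K

variable {K K' : Type}

/-- Substitution on terms: replace the variable `x` by the term `t`. -/
def substT (x : ℕ) (t : ℕ ⊕ K) : (ℕ ⊕ K) → (ℕ ⊕ K)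
  | .inl y => if y = x then t else .inl y
  | .inr c => .inr c

/-- `subst x t A` replaces every free occurrence of the variable `x` in `A` by `t`. -/
def subst (x : ℕ) (t : ℕ ⊕ K) : Fm K → Fm K
  | .pred n ts => .pred n (ts.map (substT x t))
  | .eq a b    => .eq (substT x t a) (substT x t b)
  | .neg A     => .neg (subst x t A)
  | .conj A B  => .conj (subst x t A) (subst x t B)
  | .disj A B  => .disj (subst x t A) (subst x t B)
  | .cl A      => .cl (subst x t A)
  | .ncl A     => .ncl (subst x t A)
  | .all y A   => if y = x then .all y A else .all y (subst x t A)
  | .ex y A    => if y = x then .ex y A else .ex y (subst x t A)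

/-- The set of free variables of a formula. -/
def fv : Fm K → Set ℕ
  | .pred _ ts => {y | Sum.inl y ∈ ts}
  | .eq a b    => {y | a = Sum.inl y ∨ b = Sum.inl y}
  | .neg A     => fv A
  | .conj A B  => fv A ∪ fv B
  | .disj A B  => fv A ∪ fv B
  | .cl A      => fv A
  | .ncl A     => fv A
  | .all y A   => fv A \ {y}
  | .ex y A    => fv A \ {y}

/-- The set of all (free or bound) variables occurring in a formula. -/
def vars : Fm K → Set ℕ
  | .pred _ ts => {y | Sum.inl y ∈ ts}
  | .eq a b    => {y | a = Sum.inl y ∨ b = Sum.inl y}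
  | .neg A     => vars A
  | .conj A B  => vars A ∪ vars B
  | .disj A B  => vars A ∪ vars B
  | .cl A      => vars A
  | .ncl A     => vars A
  | .all y A   => insert y (vars A)
  | .ex y A    => insert y (vars A)

/-- The constant `c` occurs in the formula. -/
def cOcc (c : K) : Fm K → Prop
  | .pred _ ts => Sum.inr c ∈ ts
  | .eq a b    => a = Sum.inr c ∨ b = Sum.inr c
  | .neg A     => cOcc c A
  | .conj A B  => cOcc c A ∨ cOcc c B
  | .disj A B  => cOcc c A ∨ cOcc c B
  | .cl A      => cOcc c A
  | .ncl A     => cOcc c A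
  | .all _ A   => cOcc c A
  | .ex _ A    => cOcc c A

/-- A sentence is a formula with no free variables. -/
def Closed (A : Fm K) : Prop := fv A = ∅

/-- The formula contains no occurrence of the operators ∘ and •. -/
def clFree : Fm K → Prop
  | .pred _ _ => True
  | .eq _ _   => True
  | .neg A    => clFree A
  | .conj A B => clFree A ∧ clFree B
  | .disj A B => clFree A ∧ clFree B
  | .cl _     => False
  | .ncl _    => False
  | .all _ A  => clFree A
  | .ex _ A   => clFree A

/-- Alphabetic variance: the least equivalence relation, compatible with the
connectives, that allows renaming a bound variable to a fresh one. -/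
inductive Alpha : Fm K → Fm K → Prop
  | refl (A : Fm K) : Alpha A A
  | symm : Alpha A B → Alpha B A
  | trans : Alpha A B → Alpha B C → Alpha A C
  | negC : Alpha A B → Alpha (.neg A) (.neg B)
  | conjC : Alpha A A' → Alpha B B' → Alpha (.conj A B) (.conj A' B')
  | disjC : Alpha A A' → Alpha B B' → Alpha (.disj A B) (.disj A' B')
  | clC : Alpha A B → Alpha (.cl A) (.cl B)
  | nclC : Alpha A B → Alpha (.ncl A) (.ncl B)
  | allC : Alpha A B → Alpha (.all x A) (.all x B)
  | exC : Alpha A B → Alpha (.ex x A) (.ex x B)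
  | allR (x y : ℕ) (A : Fm K) : y ∉ vars A →
      Alpha (.all x A) (.all y (subst x (Sum.inl y) A))
  | exR (x y : ℕ) (A : Fm K) : y ∉ vars A →
      Alpha (.ex x A) (.ex y (subst x (Sum.inl y) A))

/-- The natural deduction system QLET_F (sequent-style: `Deriv Γ A` means that
`A` is derivable from the set of hypotheses `Γ`). -/
inductive Deriv : Set (Fm K) → Fm K → Prop
  | hyp : A ∈ Γ → Deriv Γ A
  | andI : Deriv Γ A → Deriv Γ B → Deriv Γ (.conj A B)
  | andE1 : Deriv Γ (.conj A B) → Deriv Γ A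
  | andE2 : Deriv Γ (.conj A B) → Deriv Γ B
  | orI1 : Deriv Γ A → Deriv Γ (.disj A B)
  | orI2 : Deriv Γ B → Deriv Γ (.disj A B)
  | orE : Deriv Γ (.disj A B) → Deriv (insert A Γ) C → Deriv (insert B Γ) C → Deriv Γ C
  | negAndI1 : Deriv Γ (.neg A) → Deriv Γ (.neg (.conj A B))
  | negAndI2 : Deriv Γ (.neg B) → Deriv Γ (.neg (.conj A B))
  | negAndE : Deriv Γ (.neg (.conj A B)) → Deriv (insert (.neg A) Γ) C →
      Deriv (insert (.neg B) Γ) C → Deriv Γ C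
  | negOrI : Deriv Γ (.neg A) → Deriv Γ (.neg B) → Deriv Γ (.neg (.disj A B))
  | negOrE1 : Deriv Γ (.neg (.disj A B)) → Deriv Γ (.neg A)
  | negOrE2 : Deriv Γ (.neg (.disj A B)) → Deriv Γ (.neg B)
  | dnI : Deriv Γ A → Deriv Γ (.neg (.neg A))
  | dnE : Deriv Γ (.neg (.neg A)) → Deriv Γ A
  | expO : Deriv Γ (.cl A) → Deriv Γ A → Deriv Γ (.neg A) → Deriv Γ B
  | pemO : Deriv Γ (.cl A) → Deriv Γ (.disj A (.neg A))
  | consR : Deriv Γ (.cl A) → Deriv Γ (.ncl A) → Deriv Γ B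
  | compR : Deriv Γ (.disj (.cl A) (.ncl A))
  | allI : Deriv Γ (.disj B (subst x (Sum.inr c) A)) → ¬ cOcc c A → ¬ cOcc c B →
      (∀ G ∈ Γ, ¬ cOcc c G) → Deriv Γ (.disj B (.all x A))
  | allE : Deriv Γ (.all x A) → Deriv Γ (subst x (Sum.inr c) A)
  | exI : Deriv Γ (subst x (Sum.inr c) A) → Deriv Γ (.ex x A)
  | exE : Deriv Γ (.ex x A) → Deriv (insert (subst x (Sum.inr c) A) Γ) C →
      ¬ cOcc c A → ¬ cOcc c C → (∀ G ∈ Γ, ¬ cOcc c G) → Deriv Γ C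
  | negAllI : Deriv Γ (.neg (subst x (Sum.inr c) A)) → Deriv Γ (.neg (.all x A))
  | negAllE : Deriv Γ (.neg (.all x A)) → Deriv (insert (.neg (subst x (Sum.inr c) A)) Γ) C →
      ¬ cOcc c A → ¬ cOcc c C → (∀ G ∈ Γ, ¬ cOcc c G) → Deriv Γ C
  | negExI : Deriv Γ (.neg (subst x (Sum.inr c) A)) → ¬ cOcc c A →
      (∀ G ∈ Γ, ¬ cOcc c G) → Deriv Γ (.neg (.ex x A))
  | negExE : Deriv Γ (.neg (.ex x A)) → Deriv Γ (.neg (subst x (Sum.inr c) A))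
  | eqI : Deriv Γ (.eq (Sum.inr c) (Sum.inr c))
  | eqE : Deriv Γ (.eq (Sum.inr c₁) (Sum.inr c₂)) → Deriv Γ (subst x (Sum.inr c₁) A) →
      Deriv Γ (subst x (Sum.inr c₂) A)
  | av : Deriv Γ A → Alpha A A' → Deriv Γ A'

/-- An S-structure: each constant denotes an element of the domain `D`, each
predicate letter gets an extension `Pplus` and an anti-extension `Pminus`;
the extension of identity is fixed as the diagonal, its anti-extension
`eqMinus` is arbitrary. -/
structure Struc (C D : Type) where
  cI : C → D
  Pplus : ℕ → List D → Prop
  Pminus : ℕ → List D → Prop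
  eqMinus : D → D → Prop

variable {C D : Type}

/-- Denotation of a constant of the diagram language (`C ⊕ D`): a diagram
constant `ā` (for `a : D`) denotes `a` itself. -/
def den (S : Struc C D) : C ⊕ D → D := Sum.elim S.cI id

/-- Clauses (1)-(7) and (10)-(13) of the valuation definition: the clauses
for atomic and negated atomic sentences, ∧, ∨, De Morgan negations,
double negation, and the substitutional quantifier clauses. -/
structure ValCore (S : Struc C D) (v : Fm (C ⊕ D) → Bool) : Prop where
  atom : ∀ (n : ℕ) (cs : List (C ⊕ D)),
    v (.pred n (cs.map Sum.inr)) = true ↔ S.Pplus n (cs.map (den S))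
  natom : ∀ (n : ℕ) (cs : List (C ⊕ D)),
    v (.neg (.pred n (cs.map Sum.inr))) = true ↔ S.Pminus n (cs.map (den S))
  eqP : ∀ a b : C ⊕ D, v (.eq (Sum.inr a) (Sum.inr b)) = true ↔ den S a = den S b
  eqN : ∀ a b : C ⊕ D, v (.neg (.eq (Sum.inr a) (Sum.inr b))) = true ↔
    S.eqMinus (den S a) (den S b)
  andC : ∀ A B, Closed A → Closed B →
    (v (.conj A B) = true ↔ v A = true ∧ v B = true)
  orC : ∀ A B, Closed A → Closed B →
    (v (.disj A B) = true ↔ v A = true ∨ v B = true)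
  nandC : ∀ A B, Closed A → Closed B →
    (v (.neg (.conj A B)) = true ↔ v (.neg A) = true ∨ v (.neg B) = true)
  norC : ∀ A B, Closed A → Closed B →
    (v (.neg (.disj A B)) = true ↔ v (.neg A) = true ∧ v (.neg B) = true)
  dnC : ∀ A, Closed A → v (.neg (.neg A)) = v A
  allC : ∀ (x : ℕ) (A : Fm (C ⊕ D)), fv A ⊆ {x} →
    (v (.all x A) = true ↔ ∀ d : D, v (subst x (Sum.inr (Sum.inr d)) A) = true)
  exC : ∀ (x : ℕ) (A : Fm (C ⊕ D)), fv A ⊆ {x} →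
    (v (.ex x A) = true ↔ ∃ d : D, v (subst x (Sum.inr (Sum.inr d)) A) = true)
  nallC : ∀ (x : ℕ) (A : Fm (C ⊕ D)), fv A ⊆ {x} →
    (v (.neg (.all x A)) = true ↔ ∃ d : D, v (.neg (subst x (Sum.inr (Sum.inr d)) A)) = true)
  nexC : ∀ (x : ℕ) (A : Fm (C ⊕ D)), fv A ⊆ {x} →
    (v (.neg (.ex x A)) = true ↔ ∀ d : D, v (.neg (subst x (Sum.inr (Sum.inr d)) A)) = true)

/-- An 𝔄-valuation for QLET_F: the determined clauses together with clauses
(8), (9), (14) (alphabetic variants) and (15). -/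
structure IsVal (S : Struc C D) (v : Fm (C ⊕ D) → Bool) extends ValCore S v : Prop where
  clC : ∀ A, Closed A → v (.cl A) = true → (v A = true ↔ v (.neg A) = false)
  compC : ∀ A, Closed A → (v (.cl A) = true ↔ v (.ncl A) = false)
  avC : ∀ A A', Closed A → Alpha A A' → v A = v A'
  substC : ∀ (x : ℕ) (A : Fm (C ⊕ D)), fv A ⊆ {x} → ∀ c₁ c₂ : C ⊕ D,
    den S c₁ = den S c₂ →
    v (subst x (Sum.inr c₁) A) = v (subst x (Sum.inr c₂) A) →
    (v (.neg (subst x (Sum.inr c₁) A)) = v (.neg (subst x (Sum.inr c₂) A)) ∧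
     v (.cl (subst x (Sum.inr c₁) A)) = v (.cl (subst x (Sum.inr c₂) A)) ∧
     v (.ncl (subst x (Sum.inr c₁) A)) = v (.ncl (subst x (Sum.inr c₂) A)))

/-- Map a formula along a renaming of its constants (used to embed the base
language into the diagram language). -/
def Fm.map (f : K → K') : Fm K → Fm K'
  | .pred n ts => .pred n (ts.map (Sum.map id f))
  | .eq a b    => .eq (Sum.map id f a) (Sum.map id f b)
  | .neg A     => .neg (Fm.map f A)
  | .conj A B  => .conj (Fm.map f A) (Fm.map f B)
  | .disj A B  => .disj (Fm.map f A) (Fm.map f B)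
  | .cl A      => .cl (Fm.map f A)
  | .ncl A     => .ncl (Fm.map f A)
  | .all y A   => .all y (Fm.map f A)
  | .ex y A    => .ex y (Fm.map f A)

/-- A sentence of the base language holds in the interpretation ⟨S, v⟩. -/
def Sat (S : Struc C D) (v : Fm (C ⊕ D) → Bool) (A : Fm C) : Prop :=
  v (A.map Sum.inl) = true

/-- Semantic consequence: every interpretation making all of Γ hold makes A hold. -/
def SemCons (Γ : Set (Fm C)) (A : Fm C) : Prop :=
  ∀ (D : Type) (S : Struc C D) (v : Fm (C ⊕ D) → Bool), Nonempty D → IsVal S v →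
    (∀ B ∈ Γ, Sat S v B) → Sat S v A

/-- Γ has a model. -/
def HasModel (Γ : Set (Fm C)) : Prop :=
  ∃ (D : Type) (S : Struc C D) (v : Fm (C ⊕ D) → Bool),
    Nonempty D ∧ IsVal S v ∧ ∀ B ∈ Γ, Sat S v B

/-- Henkin set: Δ proves an existential iff it proves some instance, and a
universal iff it proves every instance. -/
def Henkin (Δ : Set (Fm K)) : Prop :=
  ∀ (x : ℕ) (B : Fm K),
    (Deriv Δ (.ex x B) ↔ ∃ c : K, Deriv Δ (subst x (Sum.inr c) B)) ∧
    (Deriv Δ (.all x B) ↔ ∀ c : K, Deriv Δ (subst x (Sum.inr c) B))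

/-- Regular set: non-trivial, deductively closed, and disjunctive. -/
def Regular (Δ : Set (Fm K)) : Prop :=
  (∃ A, ¬ Deriv Δ A) ∧ (∀ A, Deriv Δ A → A ∈ Δ) ∧
  (∀ A B, Deriv Δ (.disj A B) → Deriv Δ A ∨ Deriv Δ B)

end QLETF

namespace S3
open QLETF

section Aux

variable {K C D : Type}

lemma beq_of_iff {a b : Bool} (h : (a = true) ↔ (b = true)) : a = b := by
  cases a <;> cases b <;> simp_all

/-- size of a formula -/
def sz : Fm K → ℕ
  | .pred _ _ => 1
  | .eq _ _ => 1
  | .neg A => sz A + 1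
  | .conj A B => sz A + sz B + 1
  | .disj A B => sz A + sz B + 1
  | .cl A => sz A + 1
  | .ncl A => sz A + 1
  | .all _ A => sz A + 1
  | .ex _ A => sz A + 1

lemma sz_pos (A : Fm K) : 1 ≤ sz A := by
  cases A <;> simp [sz]

lemma sz_subst (x : ℕ) (t : ℕ ⊕ K) (A : Fm K) : sz (subst x t A) = sz A := by
  induction A with
  | pred n ts => rfl
  | eq a b => rfl
  | neg A ih => simp [subst, sz, ih]
  | conj A B ihA ihB => simp [subst, sz, ihA, ihB]
  | disj A B ihA ihB => simp [subst, sz, ihA, ihB]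
  | cl A ih => simp [subst, sz, ih]
  | ncl A ih => simp [subst, sz, ih]
  | all y A ih => by_cases hy : y = x <;> simp [subst, hy, sz, ih]
  | ex y A ih => by_cases hy : y = x <;> simp [subst, hy, sz, ih]

lemma clFree_subst (x : ℕ) (t : ℕ ⊕ K) (A : Fm K) (h : clFree A) :
    clFree (subst x t A) := by
  induction A with
  | pred n ts => trivial
  | eq a b => trivial
  | neg A ih => exact ih h
  | conj A B ihA ihB => exact ⟨ihA h.1, ihB h.2⟩
  | disj A B ihA ihB => exact ⟨ihA h.1, ihB h.2⟩
  | cl A ih => exact h.elim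
  | ncl A ih => exact h.elim
  | all y A ih => by_cases hy : y = x <;> simp [subst, hy, clFree] <;> [exact h; exact ih h]
  | ex y A ih => by_cases hy : y = x <;> simp [subst, hy, clFree] <;> [exact h; exact ih h]

lemma fv_subst_const (x : ℕ) (c : K) (A : Fm K) :
    fv (subst x (Sum.inr c) A) ⊆ fv A \ {x} := by
  induction A with
  | pred n ts =>
    intro y hy
    simp only [subst, fv, Set.mem_setOf_eq, List.mem_map] at hy
    obtain ⟨t, ht, hts⟩ := hy
    cases t with
    | inl z =>
      by_cases hz : z = x <;> simp [substT, hz] at hts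
      subst hts
      exact ⟨by simpa [fv] using ht, by simpa using hz⟩
    | inr k => simp [substT] at hts
  | eq a b =>
    intro y hy
    simp only [subst, fv, Set.mem_setOf_eq] at hy
    rcases hy with hy | hy <;>
    · first
      | (cases a with
         | inl z =>
            by_cases hz : z = x <;> simp [substT, hz] at hy
            subst hy
            exact ⟨by simp [fv], by simpa using hz⟩
         | inr k => simp [substT] at hy)
      | (cases b with
         | inl z =>
            by_cases hz : z = x <;> simp [substT, hz] at hy
            subst hy
            exact ⟨by simp [fv], by simpa using hz⟩
         | inr k => simp [substT] at hy)
  | neg A ih => exact ih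
  | conj A B ihA ihB =>
    intro y hy
    rcases hy with hy | hy
    · exact ⟨Or.inl (ihA hy).1, (ihA hy).2⟩
    · exact ⟨Or.inr (ihB hy).1, (ihB hy).2⟩
  | disj A B ihA ihB =>
    intro y hy
    rcases hy with hy | hy
    · exact ⟨Or.inl (ihA hy).1, (ihA hy).2⟩
    · exact ⟨Or.inr (ihB hy).1, (ihB hy).2⟩
  | cl A ih => exact ih
  | ncl A ih => exact ih
  | all z A ih =>
    by_cases hz : z = x
    · subst hz
      simp only [subst, if_pos rfl, fv]
      intro y hy
      exact ⟨⟨hy.1, hy.2⟩, hy.2⟩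
    · simp only [subst, if_neg hz, fv]
      intro y hy
      exact ⟨⟨(ih hy.1).1, hy.2⟩, (ih hy.1).2⟩
  | ex z A ih =>
    by_cases hz : z = x
    · subst hz
      simp only [subst, if_pos rfl, fv]
      intro y hy
      exact ⟨⟨hy.1, hy.2⟩, hy.2⟩
    · simp only [subst, if_neg hz, fv]
      intro y hy
      exact ⟨⟨(ih hy.1).1, hy.2⟩, (ih hy.1).2⟩

lemma closed_subst (x : ℕ) (c : K) (A : Fm K) (h : fv A ⊆ {x}) :
    Closed (subst x (Sum.inr c) A) := by
  have hs := fv_subst_const x c A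
  unfold Closed
  ext y
  simp only [Set.mem_empty_iff_false, iff_false]
  intro hy
  exact (hs hy).2 (h (hs hy).1)

lemma substT_comm {x y : ℕ} (hxy : y ≠ x) (c d : K) (t : ℕ ⊕ K) :
    substT y (Sum.inr d) (substT x (Sum.inr c) t) =
    substT x (Sum.inr c) (substT y (Sum.inr d) t) := by
  cases t with
  | inl z =>
    by_cases hzx : z = x <;> by_cases hzy : z = y <;>
      simp_all [substT]
  | inr k => rfl

lemma subst_comm {x y : ℕ} (hxy : y ≠ x) (c d : K) (A : Fm K) :
    subst y (Sum.inr d) (subst x (Sum.inr c) A) =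
    subst x (Sum.inr c) (subst y (Sum.inr d) A) := by
  induction A with
  | pred n ts =>
    simp only [subst, List.map_map]
    congr 1
    exact List.map_congr_left fun t _ => substT_comm hxy c d t
  | eq a b => simp only [subst, substT_comm hxy]
  | neg A ih => simp [subst, ih]
  | conj A B ihA ihB => simp [subst, ihA, ihB]
  | disj A B ihA ihB => simp [subst, ihA, ihB]
  | cl A ih => simp [subst, ih]
  | ncl A ih => simp [subst, ih]
  | all z A ih =>
    by_cases hzx : z = x <;> by_cases hzy : z = y <;>
      simp_all [subst]
  | ex z A ih =>
    by_cases hzx : z = x <;> by_cases hzy : z = y <;>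
      simp_all [subst]

lemma map_substT_eq (x : ℕ) (c : K) (ts : List (ℕ ⊕ K)) (h : ∀ y, Sum.inl y ∈ ts → y = x) :
    ts.map (substT x (Sum.inr c)) = (ts.map (Sum.elim (fun _ => c) id)).map Sum.inr := by
  induction ts with
  | nil => rfl
  | cons t ts ih =>
    have h' : ∀ y, Sum.inl y ∈ ts → y = x := fun y hy => h y (List.mem_cons_of_mem _ hy)
    cases t with
    | inl z =>
      have hz : z = x := h z List.mem_cons_self
      simp [substT, hz, ih h']
    | inr k => simp [substT, ih h']

/-- key combined lemma, by strong induction on size -/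
lemma main_lemma {C D : Type} (S : Struc C D) (v : Fm (C ⊕ D) → Bool) (hv : ValCore S v) :
    ∀ (n : ℕ) (A : Fm (C ⊕ D)), sz A ≤ n → clFree A → ∀ (x : ℕ), fv A ⊆ {x} →
    ∀ c₁ c₂ : C ⊕ D, den S c₁ = den S c₂ →
    v (subst x (Sum.inr c₁) A) = v (subst x (Sum.inr c₂) A) ∧
    v (.neg (subst x (Sum.inr c₁) A)) = v (.neg (subst x (Sum.inr c₂) A)) := by
  intro n
  induction n with
  | zero => intro A hA; have := sz_pos A; omega
  | succ n ih =>
    intro A hsz hfree x hfv c₁ c₂ hden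
    cases A with
    | pred m ts =>
      have hts : ∀ y, Sum.inl y ∈ ts → y = x := by
        intro y hy
        have : y ∈ fv (Fm.pred (K := C ⊕ D) m ts) := hy
        simpa using hfv this
      have e1 := map_substT_eq x c₁ ts hts
      have e2 := map_substT_eq x c₂ ts hts
      have hdens : (ts.map (Sum.elim (fun _ => c₁) id)).map (den S) =
          (ts.map (Sum.elim (fun _ => c₂) id)).map (den S) := by
        simp only [List.map_map]
        apply List.map_congr_left
        intro t _
        cases t with
        | inl z => simpa using hden
        | inr k => rfl
      constructor
      · apply beq_of_iff
        simp only [subst, e1, e2, hv.atom, hdens]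
      · apply beq_of_iff
        simp only [subst, e1, e2, hv.natom, hdens]
    | eq a b =>
      have ha : ∀ z, a = Sum.inl z → z = x := by
        intro z hz
        have : z ∈ fv (Fm.eq (K := C ⊕ D) a b) := Or.inl hz
        simpa using hfv this
      have hb : ∀ z, b = Sum.inl z → z = x := by
        intro z hz
        have : z ∈ fv (Fm.eq (K := C ⊕ D) a b) := Or.inr hz
        simpa using hfv this
      have key : ∀ c : C ⊕ D, ∃ a' b' : C ⊕ D,
          substT x (Sum.inr c) a = Sum.inr a' ∧ substT x (Sum.inr c) b = Sum.inr b' ∧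
          den S a' = den S (Sum.elim (fun _ => c) id a) ∧
          den S b' = den S (Sum.elim (fun _ => c) id b) := by
        intro c
        cases a with
        | inl z => cases b with
          | inl w => exact ⟨c, c, by simp [substT, ha z rfl], by simp [substT, hb w rfl], rfl, rfl⟩
          | inr k => exact ⟨c, k, by simp [substT, ha z rfl], rfl, rfl, rfl⟩
        | inr j => cases b with
          | inl w => exact ⟨j, c, rfl, by simp [substT, hb w rfl], rfl, rfl⟩
          | inr k => exact ⟨j, k, rfl, rfl, rfl, rfl⟩
      obtain ⟨a1, b1, ea1, eb1, da1, db1⟩ := key c₁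
      obtain ⟨a2, b2, ea2, eb2, da2, db2⟩ := key c₂
      have hda : den S a1 = den S a2 := by
        rw [da1, da2]; cases a <;> simp [hden]
      have hdb : den S b1 = den S b2 := by
        rw [db1, db2]; cases b <;> simp [hden]
      constructor
      · apply beq_of_iff
        simp only [subst, ea1, eb1, ea2, eb2, hv.eqP, hda, hdb]
      · apply beq_of_iff
        simp only [subst, ea1, eb1, ea2, eb2, hv.eqN, hda, hdb]
    | neg B =>
      have hsz' : sz B ≤ n := by simp [sz] at hsz; omega
      have hfvB : fv B ⊆ {x} := hfv
      have IH := ih B hsz' hfree x hfvB c₁ c₂ hden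
      refine ⟨IH.2, ?_⟩
      show v (.neg (.neg (subst x (Sum.inr c₁) B))) = v (.neg (.neg (subst x (Sum.inr c₂) B)))
      rw [hv.dnC _ (closed_subst x c₁ B hfvB), hv.dnC _ (closed_subst x c₂ B hfvB)]
      exact IH.1
    | conj B B' =>
      have hszB : sz B ≤ n := by simp [sz] at hsz; omega
      have hszB' : sz B' ≤ n := by simp [sz] at hsz; omega
      have hfvB : fv B ⊆ {x} := fun y hy => hfv (Or.inl hy)
      have hfvB' : fv B' ⊆ {x} := fun y hy => hfv (Or.inr hy)
      have IH1 := ih B hszB hfree.1 x hfvB c₁ c₂ hden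
      have IH2 := ih B' hszB' hfree.2 x hfvB' c₁ c₂ hden
      constructor
      · apply beq_of_iff
        rw [show subst x (Sum.inr c₁) (Fm.conj B B') = .conj _ _ from rfl,
            show subst x (Sum.inr c₂) (Fm.conj B B') = .conj _ _ from rfl,
            hv.andC _ _ (closed_subst x c₁ B hfvB) (closed_subst x c₁ B' hfvB'),
            hv.andC _ _ (closed_subst x c₂ B hfvB) (closed_subst x c₂ B' hfvB'),
            IH1.1, IH2.1]
      · apply beq_of_iff
        rw [show subst x (Sum.inr c₁) (Fm.conj B B') = .conj _ _ from rfl,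
            show subst x (Sum.inr c₂) (Fm.conj B B') = .conj _ _ from rfl,
            hv.nandC _ _ (closed_subst x c₁ B hfvB) (closed_subst x c₁ B' hfvB'),
            hv.nandC _ _ (closed_subst x c₂ B hfvB) (closed_subst x c₂ B' hfvB'),
            IH1.2, IH2.2]
    | disj B B' =>
      have hszB : sz B ≤ n := by simp [sz] at hsz; omega
      have hszB' : sz B' ≤ n := by simp [sz] at hsz; omega
      have hfvB : fv B ⊆ {x} := fun y hy => hfv (Or.inl hy)
      have hfvB' : fv B' ⊆ {x} := fun y hy => hfv (Or.inr hy)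
      have IH1 := ih B hszB hfree.1 x hfvB c₁ c₂ hden
      have IH2 := ih B' hszB' hfree.2 x hfvB' c₁ c₂ hden
      constructor
      · apply beq_of_iff
        rw [show subst x (Sum.inr c₁) (Fm.disj B B') = .disj _ _ from rfl,
            show subst x (Sum.inr c₂) (Fm.disj B B') = .disj _ _ from rfl,
            hv.orC _ _ (closed_subst x c₁ B hfvB) (closed_subst x c₁ B' hfvB'),
            hv.orC _ _ (closed_subst x c₂ B hfvB) (closed_subst x c₂ B' hfvB'),
            IH1.1, IH2.1]
      · apply beq_of_iff
        rw [show subst x (Sum.inr c₁) (Fm.disj B B') = .disj _ _ from rfl,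
            show subst x (Sum.inr c₂) (Fm.disj B B') = .disj _ _ from rfl,
            hv.norC _ _ (closed_subst x c₁ B hfvB) (closed_subst x c₁ B' hfvB'),
            hv.norC _ _ (closed_subst x c₂ B hfvB) (closed_subst x c₂ B' hfvB'),
            IH1.2, IH2.2]
    | cl B => exact hfree.elim
    | ncl B => exact hfree.elim
    | all y B =>
      by_cases hyx : y = x
      · simp [subst, hyx]
      · have hszB : sz B ≤ n := by simp [sz] at hsz; omega
        have hfvB : fv B ⊆ {x, y} := by
          intro z hz
          by_cases hzy : z = y
          · exact Or.inr hzy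
          · exact Or.inl (hfv ⟨hz, hzy⟩)
        have hfvs : ∀ c : C ⊕ D, fv (subst x (Sum.inr c) B) ⊆ {y} := by
          intro c z hz
          have h2 := fv_subst_const x c B hz
          rcases hfvB h2.1 with h3 | h3
          · exact absurd h3 h2.2
          · exact h3
        have hfvd : ∀ d : D, fv (subst y (Sum.inr (Sum.inr d)) B) ⊆ {x} := by
          intro d z hz
          have h2 := fv_subst_const y (Sum.inr d) B hz
          exact hfv ⟨h2.1, h2.2⟩
        have key : ∀ d : D,
            v (subst y (Sum.inr (Sum.inr d)) (subst x (Sum.inr c₁) B)) =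
            v (subst y (Sum.inr (Sum.inr d)) (subst x (Sum.inr c₂) B)) ∧
            v (.neg (subst y (Sum.inr (Sum.inr d)) (subst x (Sum.inr c₁) B))) =
            v (.neg (subst y (Sum.inr (Sum.inr d)) (subst x (Sum.inr c₂) B))) := by
          intro d
          rw [subst_comm hyx, subst_comm hyx]
          have : sz (subst y (Sum.inr (Sum.inr d)) B) ≤ n := by rw [sz_subst]; exact hszB
          exact ih _ this (clFree_subst _ _ _ hfree) x (hfvd d) c₁ c₂ hden
        have e1 : subst x (Sum.inr c₁) (Fm.all y B) = .all y (subst x (Sum.inr c₁) B) := by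
          simp [subst, hyx]
        have e2 : subst x (Sum.inr c₂) (Fm.all y B) = .all y (subst x (Sum.inr c₂) B) := by
          simp [subst, hyx]
        constructor
        · apply beq_of_iff
          rw [e1, e2, hv.allC y _ (hfvs c₁), hv.allC y _ (hfvs c₂)]
          exact forall_congr' fun d => by rw [(key d).1]
        · apply beq_of_iff
          rw [e1, e2, hv.nallC y _ (hfvs c₁), hv.nallC y _ (hfvs c₂)]
          exact exists_congr fun d => by rw [(key d).2]
    | ex y B =>
      by_cases hyx : y = x
      · simp [subst, hyx]
      · have hszB : sz B ≤ n := by simp [sz] at hsz; omega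
        have hfvB : fv B ⊆ {x, y} := by
          intro z hz
          by_cases hzy : z = y
          · exact Or.inr hzy
          · exact Or.inl (hfv ⟨hz, hzy⟩)
        have hfvs : ∀ c : C ⊕ D, fv (subst x (Sum.inr c) B) ⊆ {y} := by
          intro c z hz
          have h2 := fv_subst_const x c B hz
          rcases hfvB h2.1 with h3 | h3
          · exact absurd h3 h2.2
          · exact h3
        have hfvd : ∀ d : D, fv (subst y (Sum.inr (Sum.inr d)) B) ⊆ {x} := by
          intro d z hz
          have h2 := fv_subst_const y (Sum.inr d) B hz
          exact hfv ⟨h2.1, h2.2⟩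
        have key : ∀ d : D,
            v (subst y (Sum.inr (Sum.inr d)) (subst x (Sum.inr c₁) B)) =
            v (subst y (Sum.inr (Sum.inr d)) (subst x (Sum.inr c₂) B)) ∧
            v (.neg (subst y (Sum.inr (Sum.inr d)) (subst x (Sum.inr c₁) B))) =
            v (.neg (subst y (Sum.inr (Sum.inr d)) (subst x (Sum.inr c₂) B))) := by
          intro d
          rw [subst_comm hyx, subst_comm hyx]
          have : sz (subst y (Sum.inr (Sum.inr d)) B) ≤ n := by rw [sz_subst]; exact hszB
          exact ih _ this (clFree_subst _ _ _ hfree) x (hfvd d) c₁ c₂ hden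
        have e1 : subst x (Sum.inr c₁) (Fm.ex y B) = .ex y (subst x (Sum.inr c₁) B) := by
          simp [subst, hyx]
        have e2 : subst x (Sum.inr c₂) (Fm.ex y B) = .ex y (subst x (Sum.inr c₂) B) := by
          simp [subst, hyx]
        constructor
        · apply beq_of_iff
          rw [e1, e2, hv.exC y _ (hfvs c₁), hv.exC y _ (hfvs c₂)]
          exact exists_congr fun d => by rw [(key d).1]
        · apply beq_of_iff
          rw [e1, e2, hv.nexC y _ (hfvs c₁), hv.nexC y _ (hfvs c₂)]
          exact forall_congr' fun d => by rw [(key d).2]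

end Aux

/-- Substitution lemma for ∘- and •-free formulas: it holds for any map
satisfying only the determined clauses (1)-(7), (10)-(13) of the valuation
definition, i.e. without clause (15). -/
theorem substitution_lemma_clfree {C D : Type} (S : Struc C D) (v : Fm (C ⊕ D) → Bool)
    (hv : ValCore S v) (x : ℕ) (A : Fm (C ⊕ D)) (hfree : clFree A) (hA : fv A ⊆ {x})
    (c₁ c₂ : C ⊕ D) (h : den S c₁ = den S c₂) :
    v (subst x (Sum.inr c₁) A) = v (subst x (Sum.inr c₂) A) :=
  (main_lemma S v hv (sz A) A le_rfl hfree x hA c₁ c₂ h).1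

end S3
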